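/- For all integers k ≥ 3 and n ≥ 2, the graph H(k,n) is a connected k-regular Hamiltonian graph on n(k+1) vertices, H(k,n) belongs to 𝒢(k), and H(k,n) is not locally connected. -/

import Mathlib

open SimpleGraph

/-- The graph `G` belongs to the class 𝒢(k): it is connected, `k`-regular, and every vertex has
at most `k` vertices at distance exactly `2`. (Finiteness is imposed via `Fintype` on vertices.) -/
def InGClass {V : Type*} (G : SimpleGraph V) (k : ℕ) : Prop :=
  G.Connected ∧ (∀ v : V, (G.neighborSet v).ncard = k) ∧
    ∀ u : V, {v : V | G.dist u v = 2}.ncard ≤ k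

/-- A graph is `t`-connected if it has more than `t` vertices and stays connected after
deleting any set of fewer than `t` vertices. -/
def IsTConnectedGraph {V : Type*} (G : SimpleGraph V) (t : ℕ) : Prop :=
  t < Nat.card V ∧ ∀ s : Set V, s.ncard < t → (G.induce sᶜ).Connected

/-- A graph is locally connected if every neighborhood induces a connected subgraph. -/
def GraphLocallyConnected {V : Type*} (G : SimpleGraph V) : Prop :=
  ∀ v : V, (G.induce (G.neighborSet v)).Connected

/-- A graph is claw-free if it has no induced subgraph isomorphic to `K_{1,3}`. -/
def GraphClawFree {V : Type*} (G : SimpleGraph V) : Prop :=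
  IsEmpty (completeBipartiteGraph (Fin 1) (Fin 3) ↪g G)

/-- The graph `H(k,n)` (0-indexed): vertices are `u_i = .inl (.inl i)`, `v_i = .inl (.inr i)`
for `i : Fin n`, and the clique `W_i = {.inr (i, j) | j : Fin (k-1)}`.  Each `W_i` is complete,
`u_i` and `v_i` are joined to all of `W_i`, and `u_i` is joined to `v_{(i+1) mod n}`
(giving the edges `u_i v_{i+1}` for `i = 1, …, n-1` and `u_n v_1` in 1-indexed notation). -/
def HGraph (k n : ℕ) : SimpleGraph ((Fin n ⊕ Fin n) ⊕ Fin n × Fin (k - 1)) :=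
  SimpleGraph.fromRel (fun a b =>
    (∃ (i : Fin n) (j j' : Fin (k - 1)), a = Sum.inr (i, j) ∧ b = Sum.inr (i, j')) ∨
    (∃ (i : Fin n) (j : Fin (k - 1)), a = Sum.inl (Sum.inl i) ∧ b = Sum.inr (i, j)) ∨
    (∃ (i : Fin n) (j : Fin (k - 1)), a = Sum.inl (Sum.inr i) ∧ b = Sum.inr (i, j)) ∨
    (∃ i i' : Fin n, a = Sum.inl (Sum.inl i) ∧ b = Sum.inl (Sum.inr i') ∧
      (i.val + 1) % n = i'.val))

namespace Stmt17

variable {V : Type*} {G : SimpleGraph V}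

def walkIdx (G : SimpleGraph V) (f : ℕ → V) (m : ℕ)
    (hadj : ∀ t, t < m → G.Adj (f t) (f (t + 1))) (s : ℕ) (hs : s ≤ m) : G.Walk (f s) (f m) :=
  if h : s = m then (Walk.nil : G.Walk (f m) (f m)).copy (congrArg f h.symm) rfl
  else Walk.cons (hadj s (by omega)) (walkIdx G f m hadj (s + 1) (by omega))
termination_by m - s

lemma walkIdx_support (G : SimpleGraph V) (f : ℕ → V) (m : ℕ)
    (hadj : ∀ t, t < m → G.Adj (f t) (f (t + 1))) (s : ℕ) (hs : s ≤ m) :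
    (walkIdx G f m hadj s hs).support = (List.range' s (m - s + 1)).map f := by
  have key : ∀ d s (hs : s ≤ m), m - s = d →
      (walkIdx G f m hadj s hs).support = (List.range' s (m - s + 1)).map f := by
    intro d
    induction d with
    | zero =>
      intro s hs hd
      have h : s = m := by omega
      subst h
      rw [walkIdx]
      simp
    | succ d ih =>
      intro s hs hd
      have h : s ≠ m := by omega
      rw [walkIdx, dif_neg h, Walk.support_cons, ih (s+1) (by omega) (by omega)]
      have heq : List.range' s (m - s + 1) = s :: List.range' (s+1) (m - (s+1) + 1) := by
        have h2 : m - s + 1 = (m - (s+1) + 1) + 1 := by omega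
        rw [h2, List.range'_succ]
      rw [heq]
      simp
  exact key (m - s) s hs rfl

lemma walkIdx_edges (G : SimpleGraph V) (f : ℕ → V) (m : ℕ)
    (hadj : ∀ t, t < m → G.Adj (f t) (f (t + 1))) (s : ℕ) (hs : s ≤ m) :
    (walkIdx G f m hadj s hs).edges
      = (List.range' s (m - s)).map (fun t => s(f t, f (t + 1))) := by
  have key : ∀ d s (hs : s ≤ m), m - s = d →
      (walkIdx G f m hadj s hs).edges
        = (List.range' s (m - s)).map (fun t => s(f t, f (t + 1))) := by
    intro d
    induction d with
    | zero =>
      intro s hs hd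
      have h : s = m := by omega
      subst h
      rw [walkIdx]
      simp
    | succ d ih =>
      intro s hs hd
      have h : s ≠ m := by omega
      rw [walkIdx, dif_neg h, Walk.edges_cons, ih (s+1) (by omega) (by omega)]
      have heq : List.range' s (m - s) = s :: List.range' (s+1) (m - (s+1)) := by
        have h2 : m - s = (m - (s+1)) + 1 := by omega
        rw [h2, List.range'_succ]
      rw [heq]
      simp
  exact key (m - s) s hs rfl

lemma ham_of_enum [Fintype V] [DecidableEq V] (f : ℕ → V) (N : ℕ)
    (hN : 3 ≤ N) (hcard : Fintype.card V = N)
    (hadj : ∀ t, t < N → G.Adj (f t) (f (t + 1)))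
    (hinj : ∀ s t, s < N → t < N → f s = f t → s = t)
    (hwrap : f N = f 0) :
    ∃ a, ∃ p : G.Walk a a, p.IsHamiltonianCycle := by
  have hinj' : ∀ s t, 1 ≤ s → s ≤ N → 1 ≤ t → t ≤ N → f s = f t → s = t := by
    intro s t hs1 hsN ht1 htN hft
    rcases eq_or_lt_of_le hsN with rfl | hsN'
    · rcases eq_or_lt_of_le htN with rfl | htN'
      · rfl
      · exact absurd (hinj t 0 htN' (by omega) (by rw [← hft, hwrap])) (by omega)
    · rcases eq_or_lt_of_le htN with rfl | htN'
      · exact absurd (hinj s 0 hsN' (by omega) (by rw [hft, hwrap])) (by omega)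
      · exact hinj s t hsN' htN' hft
  let p0 := walkIdx G f N hadj 1 (by omega)
  let p1 : G.Walk (f 1) (f 0) := p0.copy rfl hwrap
  have hsup : p1.support = (List.range' 1 N).map f := by
    show (p0.copy rfl hwrap).support = _
    rw [Walk.support_copy]
    show (walkIdx G f N hadj 1 _).support = _
    rw [walkIdx_support]
    congr 2
    omega
  have hedg : p1.edges = (List.range' 1 (N - 1)).map (fun t => s(f t, f (t + 1))) := by
    show (p0.copy rfl hwrap).edges = _
    rw [Walk.edges_copy]
    exact walkIdx_edges G f N hadj 1 (by omega)
  have hnodup : p1.support.Nodup := by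
    rw [hsup]
    refine List.Nodup.map_on ?_ (List.nodup_range' 1)
    intro x hx y hy hxy
    rw [List.mem_range'_1] at hx hy
    exact hinj' x y hx.1 (by omega) hy.1 (by omega) hxy
  have hmem : ∀ x : V, x ∈ p1.support := by
    intro x
    have hnd : ((List.range N).map f).Nodup := by
      refine List.Nodup.map_on ?_ List.nodup_range
      intro a ha b hb hab
      rw [List.mem_range] at ha hb
      exact hinj a b ha hb hab
    have huniv : ((List.range N).map f).toFinset = Finset.univ := by
      apply Finset.eq_univ_of_card
      rw [List.toFinset_card_of_nodup hnd]
      simp [hcard]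
    have hx : x ∈ (List.range N).map f := by
      rw [← List.mem_toFinset, huniv]
      exact Finset.mem_univ x
    obtain ⟨t, ht, rfl⟩ := List.mem_map.mp hx
    rw [List.mem_range] at ht
    rw [hsup]
    rcases Nat.eq_zero_or_pos t with rfl | ht1
    · refine List.mem_map.mpr ⟨N, ?_, hwrap⟩
      rw [List.mem_range'_1]; omega
    · refine List.mem_map.mpr ⟨t, ?_, rfl⟩
      rw [List.mem_range'_1]; omega
  refine ⟨f 0, Walk.cons (hadj 0 (by omega)) p1, ?_⟩
  rw [Walk.isHamiltonianCycle_isCycle_and_isHamiltonian_tail]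
  constructor
  · rw [Walk.cons_isCycle_iff]
    refine ⟨Walk.IsPath.mk' hnodup, ?_⟩
    rw [hedg]
    intro hmem'
    obtain ⟨t, ht, hst⟩ := List.mem_map.mp hmem'
    rw [List.mem_range'_1] at ht
    rw [Sym2.eq_iff] at hst
    rcases hst with ⟨h1, h2⟩ | ⟨h1, h2⟩
    · exact absurd (hinj t 0 (by omega) (by omega) h1) (by omega)
    · have ht1 : t = 1 := hinj t 1 (by omega) (by omega) h1
      subst ht1
      exact absurd (hinj 2 0 (by omega) (by omega) h2) (by omega)
  · have htail : (Walk.cons (hadj 0 (by omega)) p1).tail.support = p1.support := by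
      rw [Walk.tail_cons]; exact Walk.support_copy _ _ _
    intro x
    rw [htail]
    exact List.count_eq_one_of_mem hnodup (hmem x)

variable {k n : ℕ}

abbrev Uu (k n : ℕ) (i : Fin n) : (Fin n ⊕ Fin n) ⊕ Fin n × Fin (k - 1) := Sum.inl (Sum.inl i)
abbrev Vv (k n : ℕ) (i : Fin n) : (Fin n ⊕ Fin n) ⊕ Fin n × Fin (k - 1) := Sum.inl (Sum.inr i)
abbrev Ww (k n : ℕ) (i : Fin n) (j : Fin (k - 1)) : (Fin n ⊕ Fin n) ⊕ Fin n × Fin (k - 1) :=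
  Sum.inr (i, j)

lemma adj_ww (i i' : Fin n) (j j' : Fin (k-1)) :
    (HGraph k n).Adj (Ww k n i j) (Ww k n i' j') ↔ i = i' ∧ j ≠ j' := by
  simp [HGraph, fromRel_adj, Prod.ext_iff]
  aesop

lemma adj_uw (i i' : Fin n) (j : Fin (k-1)) :
    (HGraph k n).Adj (Uu k n i) (Ww k n i' j) ↔ i = i' := by
  simp [HGraph, fromRel_adj]
  aesop

lemma adj_vw (i i' : Fin n) (j : Fin (k-1)) :
    (HGraph k n).Adj (Vv k n i) (Ww k n i' j) ↔ i = i' := by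
  simp [HGraph, fromRel_adj]
  aesop

lemma adj_uv (i i' : Fin n) :
    (HGraph k n).Adj (Uu k n i) (Vv k n i') ↔ (i.val + 1) % n = i'.val := by
  simp [HGraph, fromRel_adj]

lemma adj_uu (i i' : Fin n) : ¬ (HGraph k n).Adj (Uu k n i) (Uu k n i') := by
  simp [HGraph, fromRel_adj]

lemma adj_vv' (i i' : Fin n) : ¬ (HGraph k n).Adj (Vv k n i) (Vv k n i') := by
  simp [HGraph, fromRel_adj]


lemma nat_prv_lt (hn : 0 < n) (a : ℕ) : (a + n - 1) % n < n := Nat.mod_lt _ hn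

def nxt (hn : 0 < n) (i : Fin n) : Fin n := ⟨(i.val + 1) % n, Nat.mod_lt _ hn⟩
def prv (hn : 0 < n) (i : Fin n) : Fin n := ⟨(i.val + n - 1) % n, Nat.mod_lt _ hn⟩

lemma nat_prv_succ (hn : 0 < n) (a : ℕ) (ha : a < n) : ((a + n - 1) % n + 1) % n = a := by
  rcases Nat.eq_zero_or_pos a with rfl | ha1
  · rw [(by omega : 0 + n - 1 = n - 1), Nat.mod_eq_of_lt (by omega : n - 1 < n)]
    have : n - 1 + 1 = n := by omega
    rw [this, Nat.mod_self]
  · have h1 : a + n - 1 = (a - 1) + n := by omega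
    rw [h1, Nat.add_mod_right, Nat.mod_eq_of_lt (by omega : a - 1 < n)]
    have : a - 1 + 1 = a := by omega
    rw [this, Nat.mod_eq_of_lt ha]

lemma nat_succ_prv (hn : 0 < n) (a b : ℕ) (hb : b < n) (h : (b + 1) % n = a) :
    b = (a + n - 1) % n := by
  rcases Nat.lt_or_ge (b + 1) n with h1 | h1
  · rw [Nat.mod_eq_of_lt h1] at h
    subst h
    have h2 : b + 1 + n - 1 = b + n := by omega
    rw [h2, Nat.add_mod_right, Nat.mod_eq_of_lt hb]
  · have h2 : b + 1 = n := by omega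
    rw [h2, Nat.mod_self] at h
    subst h
    simp only [Nat.zero_add]
    rw [Nat.mod_eq_of_lt (by omega : n - 1 < n)]
    omega

lemma adj_uv_nxt (hn : 0 < n) (i i' : Fin n) :
    (HGraph k n).Adj (Uu k n i) (Vv k n i') ↔ i' = nxt hn i := by
  rw [adj_uv, Fin.ext_iff, nxt, eq_comm]

lemma adj_uv_prv (hn : 0 < n) (i i' : Fin n) :
    (HGraph k n).Adj (Uu k n i') (Vv k n i) ↔ i' = prv hn i := by
  rw [adj_uv, Fin.ext_iff, prv]
  constructor
  · intro h; exact nat_succ_prv hn i.val i'.val i'.isLt h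
  · intro h; rw [h]; exact nat_prv_succ hn i.val i.isLt

lemma nbhd_u (hn : 0 < n) (i : Fin n) :
    (HGraph k n).neighborSet (Uu k n i)
      = Set.range (Ww k n i) ∪ {Vv k n (nxt hn i)} := by
  ext b
  rcases b with (i' | i') | ⟨i', j'⟩
  · simp [mem_neighborSet, adj_uu]
  · simp [mem_neighborSet, adj_uv_nxt hn, Sum.inr.injEq]
  · simp [mem_neighborSet, adj_uw, Prod.ext_iff, eq_comm]

lemma nbhd_v (hn : 0 < n) (i : Fin n) :
    (HGraph k n).neighborSet (Vv k n i)
      = Set.range (Ww k n i) ∪ {Uu k n (prv hn i)} := by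
  ext b
  rcases b with (i' | i') | ⟨i', j'⟩
  · simp only [mem_neighborSet]
    rw [adj_comm, adj_uv_prv hn]
    simp
  · simp [mem_neighborSet, adj_vv']
  · simp [mem_neighborSet, adj_vw, Prod.ext_iff, eq_comm]

lemma nbhd_w (i : Fin n) (j : Fin (k-1)) :
    (HGraph k n).neighborSet (Ww k n i j)
      = (Set.range (Ww k n i) \ {Ww k n i j}) ∪ {Uu k n i, Vv k n i} := by
  ext b
  rcases b with (i' | i') | ⟨i', j'⟩
  · simp only [mem_neighborSet]
    rw [adj_comm, adj_uw]
    simp [eq_comm]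
  · simp only [mem_neighborSet]
    rw [adj_comm, adj_vw]
    simp [eq_comm]
  · simp only [mem_neighborSet]
    rw [adj_comm, adj_ww]
    simp [Prod.ext_iff]
    aesop


lemma ww_inj (i : Fin n) : Function.Injective (Ww k n i) := by
  intro a b h
  simpa [Prod.ext_iff] using h

lemma ncard_range_w (i : Fin n) : (Set.range (Ww k n i)).ncard = k - 1 := by
  rw [← Set.image_univ, Set.ncard_image_of_injective _ (ww_inj i), Set.ncard_univ]
  simp

lemma degree_all (hk : 3 ≤ k) (hn : 0 < n) (v) :
    ((HGraph k n).neighborSet v).ncard = k := by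
  rcases v with (i | i) | ⟨i, j⟩
  · rw [nbhd_u hn i, Set.ncard_union_eq (by simp), ncard_range_w, Set.ncard_singleton]
    omega
  · rw [nbhd_v hn i, Set.ncard_union_eq (by simp), ncard_range_w, Set.ncard_singleton]
    omega
  · have hdisj : Disjoint (Set.range (Ww k n i) \ {Ww k n i j})
        ({Uu k n i, Vv k n i} : Set _) := by
      rw [Set.disjoint_right]
      intro a ha hd
      obtain ⟨⟨j', hj⟩, -⟩ := hd
      simp only [Set.mem_insert_iff, Set.mem_singleton_iff] at ha
      rcases ha with rfl | rfl <;> simp at hj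
    rw [nbhd_w i j, Set.ncard_union_eq hdisj,
      Set.ncard_diff_singleton_of_mem (Set.mem_range_self j), ncard_range_w,
      Set.ncard_pair (by simp)]
    omega


lemma prv_nxt (hn : 0 < n) (i : Fin n) : prv hn (nxt hn i) = i := by
  apply Fin.ext
  exact (nat_succ_prv hn ((i.val + 1) % n) i.val i.isLt rfl).symm

lemma nxt_prv (hn : 0 < n) (i : Fin n) : nxt hn (prv hn i) = i := by
  apply Fin.ext
  exact nat_prv_succ hn i.val i.isLt

lemma exists_mid {V' : Type*} {G : SimpleGraph V'} {u v : V'}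
    (hd : G.dist u v = 2) : ∃ w, G.Adj u w ∧ G.Adj w v := by
  have hr : G.Reachable u v := Reachable.of_dist_ne_zero (by omega)
  obtain ⟨p, hp⟩ := hr.exists_walk_length_eq_dist
  rw [hd] at hp
  refine ⟨p.getVert 1, ?_, ?_⟩
  · have := p.adj_getVert_succ (by omega : 0 < p.length)
    simpa using this
  · have := p.adj_getVert_succ (by omega : 1 < p.length)
    rw [show (1 + 1 : ℕ) = p.length from by omega] at this
    rwa [p.getVert_length] at this

lemma dist2_not_adj {V' : Type*} {G : SimpleGraph V'} {u v : V'}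
    (hd : G.dist u v = 2) : ¬ G.Adj u v ∧ v ≠ u := by
  constructor
  · intro h
    rw [← dist_eq_one_iff_adj] at h
    omega
  · intro h
    subst h
    rw [dist_self] at hd
    omega

lemma dist2_u (hn : 0 < n) (i : Fin n) :
    {x | (HGraph k n).dist (Uu k n i) x = 2}
      ⊆ insert (Vv k n i) (Set.range (Ww k n (nxt hn i))) := by
  intro x hx
  simp only [Set.mem_setOf_eq] at hx
  obtain ⟨hnadj, hne⟩ := dist2_not_adj hx
  obtain ⟨w, h1, h2⟩ := exists_mid hx
  have hw : w ∈ (HGraph k n).neighborSet (Uu k n i) := h1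
  rw [nbhd_u hn i] at hw
  rcases hw with ⟨j, rfl⟩ | hw
  · have hx2 : x ∈ (HGraph k n).neighborSet (Ww k n i j) := h2
    rw [nbhd_w i j] at hx2
    rcases hx2 with ⟨⟨j', rfl⟩, -⟩ | hx2
    · exact absurd ((adj_uw i i j').mpr rfl) hnadj
    · rcases hx2 with rfl | rfl
      · exact absurd rfl hne
      · exact Set.mem_insert _ _
  · rw [Set.mem_singleton_iff] at hw
    subst hw
    have hx2 : x ∈ (HGraph k n).neighborSet (Vv k n (nxt hn i)) := h2
    rw [nbhd_v hn (nxt hn i)] at hx2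
    rcases hx2 with ⟨j, rfl⟩ | hx2
    · exact Set.mem_insert_of_mem _ ⟨j, rfl⟩
    · rw [Set.mem_singleton_iff, prv_nxt hn i] at hx2
      subst hx2
      exact absurd rfl hne

lemma dist2_v (hn : 0 < n) (i : Fin n) :
    {x | (HGraph k n).dist (Vv k n i) x = 2}
      ⊆ insert (Uu k n i) (Set.range (Ww k n (prv hn i))) := by
  intro x hx
  simp only [Set.mem_setOf_eq] at hx
  obtain ⟨hnadj, hne⟩ := dist2_not_adj hx
  obtain ⟨w, h1, h2⟩ := exists_mid hx
  have hw : w ∈ (HGraph k n).neighborSet (Vv k n i) := h1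
  rw [nbhd_v hn i] at hw
  rcases hw with ⟨j, rfl⟩ | hw
  · have hx2 : x ∈ (HGraph k n).neighborSet (Ww k n i j) := h2
    rw [nbhd_w i j] at hx2
    rcases hx2 with ⟨⟨j', rfl⟩, -⟩ | hx2
    · exact absurd ((adj_vw i i j').mpr rfl) hnadj
    · rcases hx2 with rfl | rfl
      · exact Set.mem_insert _ _
      · exact absurd rfl hne
  · rw [Set.mem_singleton_iff] at hw
    subst hw
    have hx2 : x ∈ (HGraph k n).neighborSet (Uu k n (prv hn i)) := h2
    rw [nbhd_u hn (prv hn i)] at hx2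
    rcases hx2 with ⟨j, rfl⟩ | hx2
    · exact Set.mem_insert_of_mem _ ⟨j, rfl⟩
    · rw [Set.mem_singleton_iff, nxt_prv hn i] at hx2
      subst hx2
      exact absurd rfl hne

lemma dist2_w (hn : 0 < n) (i : Fin n) (j : Fin (k-1)) :
    {x | (HGraph k n).dist (Ww k n i j) x = 2}
      ⊆ {Vv k n (nxt hn i), Uu k n (prv hn i)} := by
  intro x hx
  simp only [Set.mem_setOf_eq] at hx
  obtain ⟨hnadj, hne⟩ := dist2_not_adj hx
  obtain ⟨w, h1, h2⟩ := exists_mid hx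
  have hw : w ∈ (HGraph k n).neighborSet (Ww k n i j) := h1
  rw [nbhd_w i j] at hw
  have hxniw : ∀ j'' : Fin (k-1), x = Ww k n i j'' → False := by
    intro j'' hxe
    subst hxe
    rcases eq_or_ne j'' j with rfl | hjj
    · exact absurd rfl hne
    · exact hnadj ((adj_ww i i j j'').mpr ⟨rfl, Ne.symm hjj⟩)
  rcases hw with ⟨⟨j', rfl⟩, -⟩ | hw
  · have hx2 : x ∈ (HGraph k n).neighborSet (Ww k n i j') := h2
    rw [nbhd_w i j'] at hx2
    rcases hx2 with ⟨⟨j'', rfl⟩, -⟩ | hx2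
    · exact (hxniw j'' rfl).elim
    · rcases hx2 with rfl | rfl
      · exact absurd ((adj_uw i i j).mpr rfl).symm hnadj
      · exact absurd ((adj_vw i i j).mpr rfl).symm hnadj
  · rcases hw with rfl | rfl
    · have hx2 : x ∈ (HGraph k n).neighborSet (Uu k n i) := h2
      rw [nbhd_u hn i] at hx2
      rcases hx2 with ⟨j'', rfl⟩ | hx2
      · exact (hxniw j'' rfl).elim
      · rw [Set.mem_singleton_iff] at hx2
        subst hx2
        exact Set.mem_insert _ _
    · have hx2 : x ∈ (HGraph k n).neighborSet (Vv k n i) := h2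
      rw [nbhd_v hn i] at hx2
      rcases hx2 with ⟨j'', rfl⟩ | hx2
      · exact (hxniw j'' rfl).elim
      · rw [Set.mem_singleton_iff] at hx2
        subst hx2
        exact Set.mem_insert_of_mem _ rfl

lemma dist2_bound (hk : 3 ≤ k) (hn : 0 < n) (u) :
    {x | (HGraph k n).dist u x = 2}.ncard ≤ k := by
  rcases u with (i | i) | ⟨i, j⟩
  · calc {x | (HGraph k n).dist (Uu k n i) x = 2}.ncard
        ≤ (insert (Vv k n i) (Set.range (Ww k n (nxt hn i)))).ncard :=
          Set.ncard_le_ncard (dist2_u hn i) (Set.toFinite _)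
      _ ≤ (Set.range (Ww k n (nxt hn i))).ncard + 1 := Set.ncard_insert_le _ _
      _ ≤ k := by rw [ncard_range_w]; omega
  · calc {x | (HGraph k n).dist (Vv k n i) x = 2}.ncard
        ≤ (insert (Uu k n i) (Set.range (Ww k n (prv hn i)))).ncard :=
          Set.ncard_le_ncard (dist2_v hn i) (Set.toFinite _)
      _ ≤ (Set.range (Ww k n (prv hn i))).ncard + 1 := Set.ncard_insert_le _ _
      _ ≤ k := by rw [ncard_range_w]; omega
  · calc {x | (HGraph k n).dist (Ww k n i j) x = 2}.ncard
        ≤ ({Vv k n (nxt hn i), Uu k n (prv hn i)} : Set _).ncard :=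
          Set.ncard_le_ncard (dist2_w hn i j) (Set.toFinite _)
      _ ≤ 2 := by
          refine le_trans (Set.ncard_insert_le _ _) ?_
          rw [Set.ncard_singleton]
      _ ≤ k := by omega


def vvf (k n : ℕ) (hn : 0 < n) (t : ℕ) : (Fin n ⊕ Fin n) ⊕ Fin n × Fin (k - 1) :=
  if h1 : t % (k+1) = 0 then Vv k n ⟨t / (k+1) % n, Nat.mod_lt _ hn⟩
  else if h2 : t % (k+1) = k then Uu k n ⟨t / (k+1) % n, Nat.mod_lt _ hn⟩
  else Ww k n ⟨t / (k+1) % n, Nat.mod_lt _ hn⟩ ⟨t % (k+1) - 1, by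
    have := Nat.mod_lt t (show 0 < k+1 by omega)
    omega⟩

lemma vvf_val_v (hn : 0 < n) (m t : ℕ) (ht : t = m * (k+1)) :
    vvf k n hn t = Vv k n ⟨m % n, Nat.mod_lt _ hn⟩ := by
  subst ht
  rw [vvf, dif_pos (Nat.mul_mod_left m (k+1))]
  simp [Fin.ext_iff, Nat.mul_div_cancel _ (show 0 < k+1 by omega)]

lemma vvf_val_u (hk : 3 ≤ k) (hn : 0 < n) (q : Fin n) (t : ℕ) (ht : t = k + q.val * (k+1)) :
    vvf k n hn t = Uu k n q := by
  subst ht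
  have hmod : (k + q.val * (k+1)) % (k+1) = k := by
    rw [Nat.add_mul_mod_self_right, Nat.mod_eq_of_lt (by omega)]
  have hdiv : (k + q.val * (k+1)) / (k+1) = q.val := by
    rw [Nat.add_mul_div_right _ _ (show 0 < k+1 by omega), Nat.div_eq_of_lt (by omega), Nat.zero_add]
  rw [vvf, dif_neg (by omega), dif_pos hmod]
  simp [Fin.ext_iff, hdiv, Nat.mod_eq_of_lt q.isLt]

lemma vvf_val_w (hk : 3 ≤ k) (hn : 0 < n) (q : Fin n) (j : Fin (k-1)) (t : ℕ)
    (ht : t = (j.val + 1) + q.val * (k+1)) :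
    vvf k n hn t = Ww k n q j := by
  subst ht
  have hjk : j.val < k - 1 := j.isLt
  have hmod : ((j.val + 1) + q.val * (k+1)) % (k+1) = j.val + 1 := by
    rw [Nat.add_mul_mod_self_right, Nat.mod_eq_of_lt (by omega)]
  have hdiv : ((j.val + 1) + q.val * (k+1)) / (k+1) = q.val := by
    rw [Nat.add_mul_div_right _ _ (show 0 < k+1 by omega), Nat.div_eq_of_lt (by omega), Nat.zero_add]
  rw [vvf, dif_neg (by omega), dif_neg (by omega)]
  simp [Fin.ext_iff, Prod.ext_iff, hmod, hdiv, Nat.mod_eq_of_lt q.isLt]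

lemma vvf_cases (hk : 3 ≤ k) (hn : 0 < n) (s : ℕ) (hs : s < n * (k+1)) :
    ∃ (q : Fin n) (r : ℕ), r < k + 1 ∧ s = r + q.val * (k+1) ∧
      ((r = 0 ∧ vvf k n hn s = Vv k n q) ∨
       (r = k ∧ vvf k n hn s = Uu k n q) ∨
       (∃ j : Fin (k-1), j.val + 1 = r ∧ vvf k n hn s = Ww k n q j)) := by
  have hks : 0 < k + 1 := by omega
  have hq : s / (k+1) < n := (Nat.div_lt_iff_lt_mul hks).mpr hs
  have hrep : s = s % (k+1) + (s / (k+1)) * (k+1) := (Nat.mod_add_div' s (k+1)).symm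
  have hr : s % (k+1) < k + 1 := Nat.mod_lt _ hks
  refine ⟨⟨s / (k+1), hq⟩, s % (k+1), hr, hrep, ?_⟩
  by_cases h1 : s % (k+1) = 0
  · left
    refine ⟨h1, ?_⟩
    have : s = (s / (k+1)) * (k+1) := by omega
    rw [vvf_val_v hn _ _ this]
    simp [Fin.ext_iff, Nat.mod_eq_of_lt hq]
  · by_cases h2 : s % (k+1) = k
    · right; left
      refine ⟨h2, ?_⟩
      exact vvf_val_u hk hn ⟨s / (k+1), hq⟩ s (by show s = k + (s/(k+1)) * (k+1); omega)
    · right; right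
      refine ⟨⟨s % (k+1) - 1, by omega⟩, by show s % (k+1) - 1 + 1 = s % (k+1); omega, ?_⟩
      exact vvf_val_w hk hn ⟨s / (k+1), hq⟩ ⟨s % (k+1) - 1, by omega⟩ s
        (by show s = (s % (k+1) - 1 + 1) + (s/(k+1)) * (k+1); omega)

lemma vvf_adj (hk : 3 ≤ k) (hn : 0 < n) (t : ℕ) (ht : t < n * (k+1)) :
    (HGraph k n).Adj (vvf k n hn t) (vvf k n hn (t+1)) := by
  obtain ⟨q, r, hr, hrep, hcase⟩ := vvf_cases hk hn t ht
  rcases hcase with ⟨rfl, hv⟩ | ⟨rfl, hv⟩ | ⟨j, hj, hv⟩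
  · -- r = 0 : Vv q → Ww q 0
    rw [hv, vvf_val_w hk hn q ⟨0, by omega⟩ (t+1) (by simp; omega)]
    exact (adj_vw q q ⟨0, by omega⟩).mpr rfl
  · -- r = k : Uu q → Vv (q+1)
    rw [hv, vvf_val_v hn (q.val + 1) (t+1) (by rw [hrep]; ring)]
    exact (adj_uv q ⟨(q.val+1) % n, Nat.mod_lt _ hn⟩).mpr rfl
  · -- r = j+1
    rcases Nat.lt_or_ge (j.val + 1) (k - 1) with hlt | hge
    · rw [hv, vvf_val_w hk hn q ⟨j.val + 1, hlt⟩ (t+1) (by simp; omega)]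
      refine (adj_ww q q j ⟨j.val + 1, hlt⟩).mpr ⟨rfl, fun hc => by
        simpa using congrArg Fin.val hc⟩
    · -- j.val + 1 = k - 1, next is Uu q
      have hjv : j.val = k - 2 := by have := j.isLt; omega
      rw [hv, vvf_val_u hk hn q (t+1) (by omega)]
      exact ((adj_uw q q j).mpr rfl).symm

lemma vvf_inj (hk : 3 ≤ k) (hn : 0 < n) (s t : ℕ) (hs : s < n * (k+1)) (ht : t < n * (k+1))
    (h : vvf k n hn s = vvf k n hn t) : s = t := by
  obtain ⟨q, r, hr, hrep, hc⟩ := vvf_cases hk hn s hs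
  obtain ⟨q', r', hr', hrep', hc'⟩ := vvf_cases hk hn t ht
  rcases hc with ⟨hr0, hv⟩ | ⟨hrk, hv⟩ | ⟨j, hj, hv⟩ <;>
    rcases hc' with ⟨hr0', hv'⟩ | ⟨hrk', hv'⟩ | ⟨j', hj', hv'⟩ <;>
    rw [hv, hv'] at h <;> simp [Prod.ext_iff] at h
  · -- Vv = Vv
    obtain rfl : q = q' := h
    have : r = r' := by omega
    subst this
    rw [hrep, hrep']
  · obtain rfl : q = q' := h
    have : r = r' := by omega
    subst this
    rw [hrep, hrep']
  · obtain ⟨rfl, rfl⟩ : q = q' ∧ j = j' := h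
    have : r = r' := by omega
    subst this
    rw [hrep, hrep']

lemma vvf_wrap (hk : 3 ≤ k) (hn : 0 < n) :
    vvf k n hn (n * (k+1)) = vvf k n hn 0 := by
  rw [vvf_val_v hn n _ rfl, vvf_val_v hn 0 0 (by simp)]
  simp [Fin.ext_iff, Nat.mod_self]


lemma exists_adj_of_reachable_ne {V' : Type*} {G : SimpleGraph V'} {u x : V'}
    (h : G.Reachable u x) (hne : u ≠ x) : ∃ w, G.Adj u w := by
  obtain ⟨p⟩ := h
  cases p with
  | nil => exact absurd rfl hne
  | cons hadj _ => exact ⟨_, hadj⟩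

end Stmt17

/-- For `k ≥ 3`, `n ≥ 2`, the graph `H(k,n)` is a connected `k`-regular
Hamiltonian graph on `n(k+1)` vertices, belongs to 𝒢(k), and is not locally connected. -/
theorem stmt_17 (k n : ℕ) (hk : 3 ≤ k) (hn : 2 ≤ n) :
    (HGraph k n).Connected ∧
    (∀ v, ((HGraph k n).neighborSet v).ncard = k) ∧
    (HGraph k n).IsHamiltonian ∧
    Fintype.card ((Fin n ⊕ Fin n) ⊕ Fin n × Fin (k - 1)) = n * (k + 1) ∧
    InGClass (HGraph k n) k ∧
    ¬ GraphLocallyConnected (HGraph k n) := by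
  classical
  have hn0 : 0 < n := by omega
  have hcard : Fintype.card ((Fin n ⊕ Fin n) ⊕ Fin n × Fin (k - 1)) = n * (k + 1) := by
    simp only [Fintype.card_sum, Fintype.card_prod, Fintype.card_fin]
    have h1 : k - 1 + 2 = k + 1 := by omega
    calc n + n + n * (k - 1) = n * (k - 1 + 2) := by ring
      _ = n * (k + 1) := by rw [h1]
  have hN3 : 3 ≤ n * (k + 1) := le_trans (by omega) (Nat.mul_le_mul hn (by omega : 4 ≤ k + 1))
  have hham : ∃ a, ∃ p : (HGraph k n).Walk a a, p.IsHamiltonianCycle :=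
    Stmt17.ham_of_enum (Stmt17.vvf k n hn0) (n * (k + 1)) hN3 hcard
      (Stmt17.vvf_adj hk hn0) (Stmt17.vvf_inj hk hn0) (Stmt17.vvf_wrap hk hn0)
  have hH : (HGraph k n).IsHamiltonian := fun _ => hham
  have hconn : (HGraph k n).Connected := hH.connected
  have hdeg : ∀ v, ((HGraph k n).neighborSet v).ncard = k := Stmt17.degree_all hk hn0
  refine ⟨hconn, hdeg, hH, hcard, ⟨hconn, hdeg, fun u => Stmt17.dist2_bound hk hn0 u⟩, ?_⟩
  intro hloc
  set i0 : Fin n := ⟨0, by omega⟩ with hi0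
  have h1 := hloc (Stmt17.Uu k n i0)
  have hv1 : Stmt17.Vv k n (Stmt17.nxt hn0 i0)
      ∈ (HGraph k n).neighborSet (Stmt17.Uu k n i0) := by
    rw [Stmt17.nbhd_u hn0]
    exact Set.mem_union_right _ rfl
  have hw0 : Stmt17.Ww k n i0 ⟨0, by omega⟩
      ∈ (HGraph k n).neighborSet (Stmt17.Uu k n i0) := by
    rw [Stmt17.nbhd_u hn0]
    exact Set.mem_union_left _ ⟨_, rfl⟩
  have hne : (⟨_, hv1⟩ : (HGraph k n).neighborSet (Stmt17.Uu k n i0))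
      ≠ (⟨_, hw0⟩ : (HGraph k n).neighborSet (Stmt17.Uu k n i0)) := by
    intro hc
    have := congrArg Subtype.val hc
    simp [Stmt17.Vv, Stmt17.Ww] at this
  obtain ⟨⟨x, hxprop⟩, hadj⟩ := Stmt17.exists_adj_of_reachable_ne (h1.preconnected _ _) hne
  have hadj' : (HGraph k n).Adj (Stmt17.Vv k n (Stmt17.nxt hn0 i0)) x := by
    simpa using hadj
  have hwmem : x ∈ (HGraph k n).neighborSet (Stmt17.Vv k n (Stmt17.nxt hn0 i0)) := hadj'
  have hwmem' : x ∈ (HGraph k n).neighborSet (Stmt17.Uu k n i0) := hxprop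
  rw [Stmt17.nbhd_v hn0] at hwmem
  rw [Stmt17.nbhd_u hn0] at hwmem'
  have hnxt_ne : Stmt17.nxt hn0 i0 ≠ i0 := by
    intro hc
    have := congrArg Fin.val hc
    simp only [Stmt17.nxt, hi0] at this
    rw [Nat.mod_eq_of_lt (by omega : 0 + 1 < n)] at this
    omega
  rcases hwmem with ⟨j, rfl⟩ | hwmem
  · rcases hwmem' with ⟨j', hj⟩ | hwmem'
    · have := (Sum.inr.injEq _ _).mp hj
      rw [Prod.ext_iff] at this
      exact hnxt_ne this.1.symm
    · rw [Set.mem_singleton_iff] at hwmem'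
      exact absurd hwmem' (by simp [Stmt17.Ww, Stmt17.Vv])
  · rw [Set.mem_singleton_iff] at hwmem
    subst hwmem
    rcases hwmem' with ⟨j', hj⟩ | hwmem'
    · exact absurd hj (by simp [Stmt17.Uu, Stmt17.Ww])
    · rw [Set.mem_singleton_iff] at hwmem'
      exact absurd hwmem' (by simp [Stmt17.Uu, Stmt17.Vv])
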